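/- For every ε > 0 and integer k ≥ 1 there exist δ > 0 and an integer k' ≥ 1 such that for any two P-variables W and U, if d_H(S'_{k'}(W), S'_{k'}(U)) ≤ δ then d_H(S_k(W), S_k(U)) ≤ ε. -/

import Mathlib

set_option autoImplicit false

open MeasureTheory Set
open scoped ENNReal NNReal

noncomputable section

/-- `ℝ^n` with the Euclidean metric. -/
abbrev RE (n : ℕ) : Type := EuclideanSpace ℝ (Fin n)

/-- The random vector `(f₁(x₁), f₁(x₂), …, f_k(x₁), f_k(x₂), W(x₁,x₂,x₁₂))`. -/
def sVec {Ω₁ Ω₂ : Type*} (k : ℕ) (f : Fin k → Ω₁ → ℝ)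
    (W : Ω₁ × Ω₁ × Ω₂ → ℝ) (x : Ω₁ × Ω₁ × Ω₂) : RE (2 * k + 1) :=
  (WithLp.equiv 2 (Fin (2 * k + 1) → ℝ)).symm fun i =>
    if _ : (i : ℕ) < 2 * k then
      if (i : ℕ) % 2 = 0 then f ⟨(i : ℕ) / 2, by omega⟩ x.1
      else f ⟨(i : ℕ) / 2, by omega⟩ x.2.1
    else W x

/-- `S(f₁,…,f_k,W)`: the pushforward of the product measure `P₁ ⊗ P₁ ⊗ P₂` under `sVec`. -/
def Smeasure {Ω₁ Ω₂ : Type*} [MeasurableSpace Ω₁] [MeasurableSpace Ω₂]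
    (P₁ : Measure Ω₁) (P₂ : Measure Ω₂) {k : ℕ} (f : Fin k → Ω₁ → ℝ)
    (W : Ω₁ × Ω₁ × Ω₂ → ℝ) : Measure (RE (2 * k + 1)) :=
  (P₁.prod (P₁.prod P₂)).map (sVec k f W)

/-- The `k`-profile `S_k(W)`. -/
def SkSet {Ω₁ Ω₂ : Type*} [MeasurableSpace Ω₁] [MeasurableSpace Ω₂]
    (P₁ : Measure Ω₁) (P₂ : Measure Ω₂) (k : ℕ)
    (W : Ω₁ × Ω₁ × Ω₂ → ℝ) : Set (Measure (RE (2 * k + 1))) :=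
  {μ | ∃ f : Fin k → Ω₁ → ℝ, (∀ i, Measurable (f i)) ∧
    (∀ i x, f i x ∈ Icc (-1 : ℝ) 1) ∧ μ = Smeasure P₁ P₂ f W}

/-- A function partition: `{0,1}`-valued measurable functions summing to `1`. -/
def IsFunctionPartition {Ω₁ : Type*} [MeasurableSpace Ω₁] {k : ℕ}
    (f : Fin k → Ω₁ → ℝ) : Prop :=
  (∀ i, Measurable (f i)) ∧ (∀ i x, f i x = 0 ∨ f i x = 1) ∧ ∀ x, ∑ i, f i x = 1

/-- The restricted `k`-profile `S'_k(W)`. -/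
def SkSet' {Ω₁ Ω₂ : Type*} [MeasurableSpace Ω₁] [MeasurableSpace Ω₂]
    (P₁ : Measure Ω₁) (P₂ : Measure Ω₂) (k : ℕ)
    (W : Ω₁ × Ω₁ × Ω₂ → ℝ) : Set (Measure (RE (2 * k + 1))) :=
  {μ | ∃ f : Fin k → Ω₁ → ℝ, IsFunctionPartition f ∧ μ = Smeasure P₁ P₂ f W}

/-- Hausdorff edistance (w.r.t. the Lévy–Prokhorov distance) between sets of measures. -/
def eHausLP {X : Type*} [MeasurableSpace X] [PseudoEMetricSpace X]
    (A B : Set (Measure X)) : ℝ≥0∞ :=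
  max (⨆ μ ∈ A, ⨅ ν ∈ B, levyProkhorovEDist μ ν)
      (⨆ ν ∈ B, ⨅ μ ∈ A, levyProkhorovEDist μ ν)

/-- Hausdorff distance (w.r.t. the Lévy–Prokhorov distance) between sets of measures. -/
def dHLP {X : Type*} [MeasurableSpace X] [PseudoEMetricSpace X]
    (A B : Set (Measure X)) : ℝ := (eHausLP A B).toReal

/-- A `P`-variable: a measurable real-valued function on a product `Ω₁ × Ω₁ × Ω₂`
of probability spaces. -/
structure PVar where
  (Ω₁ : Type*)
  (Ω₂ : Type*)
  [m₁ : MeasurableSpace Ω₁]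
  [m₂ : MeasurableSpace Ω₂]
  (P₁ : Measure Ω₁)
  (P₂ : Measure Ω₂)
  (prob₁ : IsProbabilityMeasure P₁)
  (prob₂ : IsProbabilityMeasure P₂)
  (W : Ω₁ × Ω₁ × Ω₂ → ℝ)
  (meas : Measurable W)

attribute [instance] PVar.m₁ PVar.m₂

/-- The underlying product probability measure of a `P`-variable. -/
def PVar.vol (V : PVar) : Measure (V.Ω₁ × V.Ω₁ × V.Ω₂) := V.P₁.prod (V.P₁.prod V.P₂)

/-- The `k`-profile of a `P`-variable. -/
def PVar.Sk (V : PVar) (k : ℕ) : Set (Measure (RE (2 * k + 1))) := SkSet V.P₁ V.P₂ k V.W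

/-- The restricted `k`-profile of a `P`-variable. -/
def PVar.Sk' (V : PVar) (k : ℕ) : Set (Measure (RE (2 * k + 1))) := SkSet' V.P₁ V.P₂ k V.W

/-- The `P`-variables metric `d_M`. -/
def dM (V U : PVar) : ℝ :=
  ∑' k : ℕ, (2 : ℝ)⁻¹ ^ (k + 1) * dHLP (V.Sk (k + 1)) (U.Sk (k + 1))

universe u₁ u₂ u₃ u₄

open scoped BigOperators

lemma sVec_apply {Ω₁ Ω₂ : Type*} (k : ℕ) (f : Fin k → Ω₁ → ℝ) (W : Ω₁ × Ω₁ × Ω₂ → ℝ)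
    (x : Ω₁ × Ω₁ × Ω₂) (i : Fin (2 * k + 1)) :
    sVec k f W x i =
      if h : (i : ℕ) < 2 * k then
        if (i : ℕ) % 2 = 0 then f ⟨(i : ℕ) / 2, by omega⟩ x.1
        else f ⟨(i : ℕ) / 2, by omega⟩ x.2.1
      else W x := rfl

section helpers
variable {Ω₁ Ω₂ : Type*} [MeasurableSpace Ω₁] [MeasurableSpace Ω₂]

lemma measurable_sVec {k : ℕ} {f : Fin k → Ω₁ → ℝ} {W : Ω₁ × Ω₁ × Ω₂ → ℝ}
    (hf : ∀ i, Measurable (f i)) (hW : Measurable W) :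
    Measurable (sVec k f W) := by
  refine (WithLp.measurable_toLp 2 (Fin (2 * k + 1) → ℝ)).comp
    (f := fun x i => sVec k f W x i) ?_
  apply measurable_pi_lambda
  intro i
  have : (fun x : Ω₁ × Ω₁ × Ω₂ => sVec k f W x i) =
      fun x => if h : (i : ℕ) < 2 * k then
        if (i : ℕ) % 2 = 0 then f ⟨(i : ℕ) / 2, by omega⟩ x.1
        else f ⟨(i : ℕ) / 2, by omega⟩ x.2.1
      else W x := rfl
  rw [this]
  by_cases h : (i : ℕ) < 2 * k
  · simp only [h, dif_pos]
    by_cases h2 : (i : ℕ) % 2 = 0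
    · simp only [h2, if_pos]
      exact (hf _).comp measurable_fst
    · simp only [h2, if_neg, if_false]
      exact (hf _).comp (measurable_fst.comp measurable_snd)
  · simp only [h, dif_neg, dite_false]
    exact hW

end helpers
set_option linter.unusedSectionVars false

section LP

lemma lpEDist_map_le_of_dist_le {α : Type*} [MeasurableSpace α] (μ : Measure α)
    {n : ℕ} {φ ψ : α → RE n} (hφ : Measurable φ) (hψ : Measurable ψ)
    {c : ℝ} (hc : 0 ≤ c) (h : ∀ x, dist (φ x) (ψ x) ≤ c) :
    levyProkhorovEDist (μ.map φ) (μ.map ψ) ≤ ENNReal.ofReal c := by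
  apply levyProkhorovEDist_le_of_forall
  intro ε B hε hεtop hB
  have hclt : c < ε.toReal := by
    rw [ENNReal.ofReal_lt_iff_lt_toReal hc hεtop.ne] at hε
    exact hε
  have key : ∀ (f g : α → RE n) (hm : Measurable f) (hm' : Measurable g),
      (∀ x, dist (f x) (g x) ≤ c) →
      μ.map f B ≤ μ.map g (Metric.thickening ε.toReal B) + ε := by
    intro f g hm hm' hd
    rw [Measure.map_apply hm hB,
      Measure.map_apply hm' Metric.isOpen_thickening.measurableSet]
    refine le_trans (le_trans (measure_mono ?_) le_rfl) le_self_add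
    intro x hx
    simp only [Set.mem_preimage] at hx ⊢
    rw [Metric.mem_thickening_iff]
    exact ⟨f x, hx, lt_of_le_of_lt (by rw [dist_comm]; exact hd x) hclt⟩
  exact ⟨key φ ψ hφ hψ h, key ψ φ hψ hφ (fun x => by rw [dist_comm]; exact h x)⟩

lemma lpEDist_map_lipschitz {n m : ℕ} {T : RE n → RE m} {L : ℝ≥0} (hL : 1 ≤ L)
    (hT : LipschitzWith L T) (μ ν : Measure (RE n)) [IsFiniteMeasure μ] [IsFiniteMeasure ν] :
    levyProkhorovEDist (μ.map T) (ν.map T) ≤ L * levyProkhorovEDist μ ν := by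
  have hTm : Measurable T := hT.continuous.measurable
  have hL0 : (L : ℝ≥0∞) ≠ 0 := by
    simp only [ne_eq, ENNReal.coe_eq_zero]
    intro h; rw [h] at hL; exact absurd hL (by norm_num)
  have hLtop : (L : ℝ≥0∞) ≠ ∞ := ENNReal.coe_ne_top
  apply levyProkhorovEDist_le_of_forall
  intro ε B hε hεtop hB
  set ε' : ℝ≥0∞ := ε / L with hε'
  have hdlt : levyProkhorovEDist μ ν < ε' := by
    rw [hε', ENNReal.lt_div_iff_mul_lt (Or.inl hL0) (Or.inl hLtop), mul_comm]
    exact hε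
  have hε'le : ε' ≤ ε := by
    rw [hε']
    apply ENNReal.div_le_of_le_mul
    exact le_mul_of_one_le_right zero_le (by exact_mod_cast hL)
  have hε'top : ε' ≠ ∞ := (lt_of_le_of_lt hε'le hεtop).ne
  have hLε' : (L : ℝ≥0∞) * ε' ≤ ε := ENNReal.mul_div_le
  -- thickening inclusion
  have incl : ∀ B' : Set (RE m), Metric.thickening ε'.toReal (T ⁻¹' B') ⊆
      T ⁻¹' (Metric.thickening ε.toReal B') := by
    intro B' x hx
    rw [Metric.mem_thickening_iff] at hx
    obtain ⟨z, hz, hdz⟩ := hx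
    simp only [Set.mem_preimage] at hz ⊢
    rw [Metric.mem_thickening_iff]
    refine ⟨T z, hz, ?_⟩
    calc dist (T x) (T z) ≤ L * dist x z := hT.dist_le_mul x z
      _ < L * ε'.toReal := by
          apply mul_lt_mul_of_pos_left hdz
          exact lt_of_lt_of_le zero_lt_one (by exact_mod_cast hL)
      _ = ((L : ℝ≥0∞) * ε').toReal := by
          rw [ENNReal.toReal_mul, ENNReal.coe_toReal]
      _ ≤ ε.toReal := ENNReal.toReal_mono hεtop.ne hLε'
  constructor
  · rw [Measure.map_apply hTm hB,
      Measure.map_apply hTm Metric.isOpen_thickening.measurableSet]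
    calc μ (T ⁻¹' B) ≤ ν (Metric.thickening ε'.toReal (T ⁻¹' B)) + ε' :=
          left_measure_le_of_levyProkhorovEDist_lt hdlt (hTm hB)
      _ ≤ ν (T ⁻¹' Metric.thickening ε.toReal B) + ε :=
          add_le_add (measure_mono (incl B)) hε'le
  · rw [Measure.map_apply hTm hB,
      Measure.map_apply hTm Metric.isOpen_thickening.measurableSet]
    calc ν (T ⁻¹' B) ≤ μ (Metric.thickening ε'.toReal (T ⁻¹' B)) + ε' :=
          right_measure_le_of_levyProkhorovEDist_lt hdlt (hTm hB)
      _ ≤ μ (T ⁻¹' Metric.thickening ε.toReal B) + ε :=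
          add_le_add (measure_mono (incl B)) hε'le

end LP
section Euclid

lemma abs_coord_le_dist {n : ℕ} (v w : RE n) (i : Fin n) : |v i - w i| ≤ dist v w := by
  rw [EuclideanSpace.dist_eq, ← Real.sqrt_sq_eq_abs]
  apply Real.sqrt_le_sqrt
  have : (v i - w i) ^ 2 = dist (v i) (w i) ^ 2 := by rw [Real.dist_eq, sq_abs]
  rw [this]
  exact Finset.single_le_sum (f := fun i => dist (v i) (w i) ^ 2)
    (fun i _ => sq_nonneg _) (Finset.mem_univ i)

lemma dist_le_of_coords {n : ℕ} (v w : RE n) {c : ℝ} (hc : 0 ≤ c)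
    (h : ∀ i, |v i - w i| ≤ c) : dist v w ≤ n * c := by
  rw [EuclideanSpace.dist_eq]
  have h1 : ∑ i, dist (v i) (w i) ^ 2 ≤ (n * c) ^ 2 := by
    calc ∑ i, dist (v i) (w i) ^ 2 ≤ ∑ _i : Fin n, c ^ 2 := by
          apply Finset.sum_le_sum
          intro i _
          have hi := h i
          rw [Real.dist_eq]
          exact pow_le_pow_left₀ (abs_nonneg _) hi 2
      _ = n * c ^ 2 := by simp [Finset.sum_const, nsmul_eq_mul]
      _ ≤ (n*c) ^ 2 := by
          have hn : (1:ℝ) ≤ n ∨ (n:ℝ) = 0 := by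
            rcases Nat.eq_zero_or_pos n with h0 | h0
            · exact Or.inr (by exact_mod_cast h0)
            · exact Or.inl (by exact_mod_cast h0)
          rcases hn with hn | hn
          · nlinarith [sq_nonneg c]
          · simp [hn]
  calc Real.sqrt (∑ i, dist (v i) (w i) ^ 2) ≤ Real.sqrt ((n*c)^2) := Real.sqrt_le_sqrt h1
    _ = n * c := Real.sqrt_sq (by positivity)

/-- A linear map `ℝ^n → ℝ^m` given by a matrix. -/
def linT {n m : ℕ} (M : Fin m → Fin n → ℝ) (v : RE n) : RE m :=
  (WithLp.equiv 2 (Fin m → ℝ)).symm fun j => ∑ i, M j i * v i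

lemma linT_apply {n m : ℕ} (M : Fin m → Fin n → ℝ) (v : RE n) (j : Fin m) :
    linT M v j = ∑ i, M j i * v i := rfl

lemma linT_lipschitz {n m : ℕ} {M : Fin m → Fin n → ℝ} (hM : ∀ j i, |M j i| ≤ 1) :
    LipschitzWith ((m * n : ℕ) : ℝ≥0) (linT M) := by
  apply LipschitzWith.of_dist_le_mul
  intro v w
  have key : ∀ j, |linT M v j - linT M w j| ≤ n * dist v w := by
    intro j
    rw [linT_apply, linT_apply, ← Finset.sum_sub_distrib]
    calc |∑ i, (M j i * v i - M j i * w i)| ≤ ∑ i, |M j i * v i - M j i * w i| :=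
          Finset.abs_sum_le_sum_abs _ _
      _ ≤ ∑ _i : Fin n, dist v w := by
          apply Finset.sum_le_sum
          intro i _
          rw [← mul_sub, abs_mul]
          calc |M j i| * |v i - w i| ≤ 1 * |v i - w i| :=
                mul_le_mul_of_nonneg_right (hM j i) (abs_nonneg _)
            _ = |v i - w i| := one_mul _
            _ ≤ dist v w := abs_coord_le_dist v w i
      _ = n * dist v w := by simp [Finset.sum_const, nsmul_eq_mul]
  calc dist (linT M v) (linT M w) ≤ m * (n * dist v w) :=
        dist_le_of_coords _ _ (by positivity) key
    _ = ((m * n : ℕ) : ℝ≥0) * dist v w := by push_cast; ring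

end Euclid
section Round

/-- Grid midpoints in `[-1,1]`. -/
def cval (m : ℕ) (a : Fin m) : ℝ := -1 + (2 * (a : ℕ) + 1) / m

/-- Rounding `[-1,1]` to the grid. -/
def rndF (m : ℕ) (hm : 0 < m) (t : ℝ) : Fin m :=
  ⟨min ⌊(t + 1) * m / 2⌋₊ (m - 1), by omega⟩

lemma abs_cval_le {m : ℕ} (hm : 0 < m) (a : Fin m) : |cval m a| ≤ 1 := by
  have ha : (a : ℕ) < m := a.isLt
  have hm' : (0:ℝ) < m := by exact_mod_cast hm
  have ha' : ((a:ℕ):ℝ) ≤ (m:ℝ) - 1 := by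
    have h1 : (a:ℕ) + 1 ≤ m := ha
    have h2 := Nat.cast_le (α := ℝ).mpr h1
    push_cast at h2; linarith
  rw [abs_le]
  constructor
  · unfold cval
    have : (0:ℝ) ≤ (2 * (a:ℕ) + 1) / m := by positivity
    linarith
  · unfold cval
    have h2 : (2 * ((a:ℕ):ℝ) + 1) / m ≤ 2 := by
      rw [div_le_iff₀ hm']; linarith
    linarith

lemma cval_mem {m : ℕ} (hm : 0 < m) (a : Fin m) : cval m a ∈ Icc (-1 : ℝ) 1 := by
  have := abs_cval_le hm a
  rw [abs_le] at this
  exact ⟨this.1, this.2⟩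

lemma rnd_err {m : ℕ} (hm : 0 < m) {t : ℝ} (ht : t ∈ Icc (-1 : ℝ) 1) :
    |t - cval m (rndF m hm t)| ≤ 1 / m := by
  obtain ⟨ht1, ht2⟩ := ht
  have hm' : (0:ℝ) < m := by exact_mod_cast hm
  set s : ℝ := (t + 1) * m / 2 with hs
  have hs0 : 0 ≤ s := by rw [hs]; nlinarith
  have hsm : s ≤ m := by rw [hs]; nlinarith
  set jv : ℕ := min ⌊s⌋₊ (m - 1) with hjv
  have hjle : (jv : ℝ) ≤ s := by
    have h1 : jv ≤ ⌊s⌋₊ := min_le_left _ _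
    have h2 : (⌊s⌋₊ : ℝ) ≤ s := Nat.floor_le hs0
    have h3 : (jv:ℝ) ≤ (⌊s⌋₊:ℝ) := by exact_mod_cast h1
    linarith
  have hslt : s ≤ (jv : ℝ) + 1 := by
    by_cases hc : ⌊s⌋₊ ≤ m - 1
    · have hj : jv = ⌊s⌋₊ := min_eq_left hc
      have := Nat.lt_floor_add_one s
      rw [hj]
      push_cast
      linarith
    · have hj : jv = m - 1 := min_eq_right (le_of_not_ge hc)
      have : ((jv:ℕ):ℝ) + 1 = m := by
        rw [hj]
        have : m - 1 + 1 = m := Nat.succ_pred_eq_of_pos hm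
        exact_mod_cast congrArg (Nat.cast (R := ℝ)) this
      linarith
  have hcv : ((rndF m hm t : ℕ) : ℝ) = (jv : ℝ) := rfl
  have heq : t - cval m (rndF m hm t) = (2 * s - (2 * jv + 1)) / m := by
    unfold cval
    rw [hcv, hs]
    field_simp
    ring
  rw [heq, abs_div, abs_of_pos hm']
  gcongr
  rw [abs_le]
  constructor <;> linarith

end Round
section Matrix

/-- Coefficient matrix translating partition statistics to test-function statistics. -/
def Mmat (k m : ℕ) : Fin (2 * k + 1) → Fin (2 * (m ^ k) + 1) → ℝ := fun j i =>
  if hj : (j : ℕ) < 2 * k then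
    if hi : (i : ℕ) < 2 * (m ^ k) ∧ (i : ℕ) % 2 = (j : ℕ) % 2 then
      cval m (finFunctionFinEquiv.symm (⟨(i : ℕ) / 2, by omega⟩ : Fin (m ^ k))
        ⟨(j : ℕ) / 2, by omega⟩)
    else 0
  else if (i : ℕ) = 2 * (m ^ k) then 1 else 0

lemma abs_Mmat_le {k m : ℕ} (hm : 0 < m) (j : Fin (2 * k + 1)) (i : Fin (2 * (m ^ k) + 1)) :
    |Mmat k m j i| ≤ 1 := by
  unfold Mmat
  by_cases hj : (j : ℕ) < 2 * k
  · rw [dif_pos hj]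
    by_cases hi : (i : ℕ) < 2 * (m ^ k) ∧ (i : ℕ) % 2 = (j : ℕ) % 2
    · rw [dif_pos hi]; exact abs_cval_le hm _
    · rw [dif_neg hi]; simp
  · rw [dif_neg hj]
    by_cases hi : (i : ℕ) = 2 * (m ^ k)
    · rw [if_pos hi]; simp
    · rw [if_neg hi]; simp

lemma sum_shift {k' : ℕ} (r : ℕ) (hr : r < 2) (F : Fin (2 * k' + 1) → ℝ)
    (hzero : ∀ i : Fin (2 * k' + 1), ¬((i : ℕ) < 2 * k' ∧ (i : ℕ) % 2 = r) → F i = 0) :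
    ∑ i, F i = ∑ b : Fin k', F ⟨2 * (b : ℕ) + r, by omega⟩ := by
  set ι : Fin k' → Fin (2 * k' + 1) := fun b => ⟨2 * (b : ℕ) + r, by omega⟩ with hι
  calc ∑ i, F i = ∑ i ∈ Finset.image ι Finset.univ, F i := by
        symm
        apply Finset.sum_subset (Finset.subset_univ _)
        intro i _ hi
        apply hzero
        rintro ⟨h1, h2⟩
        apply hi
        rw [Finset.mem_image]
        refine ⟨⟨(i : ℕ) / 2, by omega⟩, Finset.mem_univ _, ?_⟩
        rw [hι]
        apply Fin.ext
        simp only []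
        omega
    _ = ∑ b, F (ι b) := by
        apply Finset.sum_image
        intro a _ b _ hab
        have : (ι a : ℕ) = (ι b : ℕ) := by rw [hab]
        rw [hι] at this
        simp only [] at this
        apply Fin.ext
        omega

end Matrix
section KeyIdentity

lemma key_sum {Ω₁ Ω₂ : Type*} (k m : ℕ) (h : Fin (m ^ k) → Ω₁ → ℝ)
    (W : Ω₁ × Ω₁ × Ω₂ → ℝ) (x : Ω₁ × Ω₁ × Ω₂) (j : Fin (2 * k + 1))
    (hj : (j : ℕ) < 2 * k) (r : ℕ) (hr : r < 2) (hrj : (j : ℕ) % 2 = r) :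
    ∑ i, Mmat k m j i * sVec (m ^ k) h W x i =
      ∑ b : Fin (m ^ k), cval m (finFunctionFinEquiv.symm b ⟨(j : ℕ) / 2, by omega⟩) *
        (if r = 0 then h b x.1 else h b x.2.1) := by
  have hvanish : ∀ i : Fin (2 * (m ^ k) + 1), ¬((i : ℕ) < 2 * (m ^ k) ∧ (i : ℕ) % 2 = r) →
      Mmat k m j i * sVec (m ^ k) h W x i = 0 := by
    intro i hi
    have hM : Mmat k m j i = 0 := by
      unfold Mmat
      rw [dif_pos hj, dif_neg]
      rintro ⟨h1, h2⟩
      exact hi ⟨h1, by omega⟩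
    rw [hM, zero_mul]
  rw [sum_shift r hr _ hvanish]
  apply Finset.sum_congr rfl
  intro b _
  have hblt : 2 * (b : ℕ) + r < 2 * (m ^ k) := by have := b.isLt; omega
  have hMval : Mmat k m j ⟨2 * (b : ℕ) + r, by omega⟩ =
      cval m (finFunctionFinEquiv.symm b ⟨(j : ℕ) / 2, by omega⟩) := by
    unfold Mmat
    rw [dif_pos hj, dif_pos (show 2 * (b : ℕ) + r < 2 * (m ^ k) ∧
      (2 * (b : ℕ) + r) % 2 = (j : ℕ) % 2 from ⟨hblt, by omega⟩)]
    exact congrArg (fun z : Fin (m ^ k) =>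
      cval m (finFunctionFinEquiv.symm z ⟨(j : ℕ) / 2, by omega⟩))
      (Fin.ext (show (2 * (b : ℕ) + r) / 2 = (b : ℕ) by omega))
  have hVval : sVec (m ^ k) h W x ⟨2 * (b : ℕ) + r, by omega⟩ =
      (if r = 0 then h b x.1 else h b x.2.1) := by
    rw [sVec_apply, dif_pos (show 2 * (b : ℕ) + r < 2 * (m ^ k) from hblt)]
    by_cases hr0 : r = 0
    · rw [if_pos (show (2 * (b : ℕ) + r) % 2 = 0 by omega), if_pos hr0]
      exact congrArg (fun z : Fin (m ^ k) => h z x.1)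
        (Fin.ext (show (2 * (b : ℕ) + r) / 2 = (b : ℕ) by omega))
    · rw [if_neg (show ¬((2 * (b : ℕ) + r) % 2 = 0) by omega), if_neg hr0]
      exact congrArg (fun z : Fin (m ^ k) => h z x.2.1)
        (Fin.ext (show (2 * (b : ℕ) + r) / 2 = (b : ℕ) by omega))
  rw [hMval, hVval]

lemma linT_sVec {Ω₁ Ω₂ : Type*} (k m : ℕ) (h : Fin (m ^ k) → Ω₁ → ℝ)
    (W : Ω₁ × Ω₁ × Ω₂ → ℝ) (x : Ω₁ × Ω₁ × Ω₂) :
    linT (Mmat k m) (sVec (m ^ k) h W x) =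
      sVec k (fun j y => ∑ b : Fin (m ^ k), cval m (finFunctionFinEquiv.symm b j) * h b y)
        W x := by
  refine PiLp.ext fun j => ?_
  rw [linT_apply, sVec_apply]
  by_cases hj : (j : ℕ) < 2 * k
  · rw [dif_pos hj]
    by_cases hpar : (j : ℕ) % 2 = 0
    · rw [key_sum k m h W x j hj 0 (by omega) hpar, if_pos hpar]
      simp
    · rw [key_sum k m h W x j hj 1 (by omega) (by omega), if_neg hpar]
      simp
  · rw [dif_neg hj]
    have hterm : ∀ i : Fin (2 * (m ^ k) + 1), Mmat k m j i * sVec (m ^ k) h W x i =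
        if i = (⟨2 * (m ^ k), by omega⟩ : Fin (2 * (m ^ k) + 1))
          then sVec (m ^ k) h W x i else 0 := by
      intro i
      unfold Mmat
      rw [dif_neg hj]
      by_cases hi : (i : ℕ) = 2 * (m ^ k)
      · rw [if_pos hi, one_mul, if_pos (Fin.ext hi)]
      · rw [if_neg hi, zero_mul, if_neg (fun hh => hi (congrArg Fin.val hh))]
    rw [Finset.sum_congr rfl (fun i _ => hterm i),
      Finset.sum_ite_eq' Finset.univ _ (fun i => sVec (m ^ k) h W x i),
      if_pos (Finset.mem_univ _), sVec_apply,
      dif_neg (show ¬(2 * (m ^ k) < 2 * (m ^ k)) from lt_irrefl _)]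

end KeyIdentity
section PartitionConstr

lemma monotone_rnd (m : ℕ) : Monotone (fun t : ℝ => min ⌊(t + 1) * m / 2⌋₊ (m - 1)) := by
  intro a b hab
  apply min_le_min _ le_rfl
  apply Nat.floor_le_floor
  have hm : (0:ℝ) ≤ m := Nat.cast_nonneg m
  have h2 : (a + 1) * m ≤ (b + 1) * m := by nlinarith
  linarith

lemma measurable_rndF (m : ℕ) (hm : 0 < m) : Measurable (rndF m hm) := by
  apply measurable_to_countable
  intro y
  apply Set.OrdConnected.measurableSet
  constructor
  intro t1 h1 t2 h2 t ht
  simp only [Set.mem_preimage, Set.mem_singleton_iff] at h1 h2 ⊢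
  have e1 : (rndF m hm t1 : ℕ) = (rndF m hm y : ℕ) := by rw [h1]
  have e2 : (rndF m hm t2 : ℕ) = (rndF m hm y : ℕ) := by rw [h2]
  apply Fin.ext
  have m1 := monotone_rnd m ht.1
  have m2 := monotone_rnd m ht.2
  simp only [] at m1 m2
  have hv1 : (rndF m hm t1 : ℕ) = min ⌊(t1 + 1) * m / 2⌋₊ (m - 1) := rfl
  have hv2 : (rndF m hm t2 : ℕ) = min ⌊(t2 + 1) * m / 2⌋₊ (m - 1) := rfl
  have hvt : (rndF m hm t : ℕ) = min ⌊(t + 1) * m / 2⌋₊ (m - 1) := rfl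
  omega

variable {Ω : Type*} [MeasurableSpace Ω]

/-- The discretizing partition associated to `f`. -/
def gPart (k m : ℕ) (hm : 0 < m) (f : Fin k → Ω → ℝ) (b : Fin (m ^ k)) (y : Ω) : ℝ :=
  if finFunctionFinEquiv.symm b = (fun i => rndF m hm (f i y)) then 1 else 0

lemma gPart_isPartition (k m : ℕ) (hm : 0 < m) (f : Fin k → Ω → ℝ)
    (hf : ∀ i, Measurable (f i)) : IsFunctionPartition (gPart k m hm f) := by
  classical
  refine ⟨?_, ?_, ?_⟩
  · intro b
    have : gPart k m hm f b = Set.indicator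
        (⋂ i, {y : Ω | rndF m hm (f i y) = finFunctionFinEquiv.symm b i}) (fun _ => 1) := by
      funext y
      unfold gPart
      rw [Set.indicator_apply]
      by_cases hy : finFunctionFinEquiv.symm b = fun i => rndF m hm (f i y)
      · rw [if_pos hy, if_pos]
        simp only [Set.mem_iInter, Set.mem_setOf_eq]
        intro i
        rw [congrFun hy i]
      · rw [if_neg hy, if_neg]
        simp only [Set.mem_iInter, Set.mem_setOf_eq]
        intro hc
        exact hy (funext fun i => (hc i).symm)
    rw [this]
    apply Measurable.indicator measurable_const
    apply MeasurableSet.iInter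
    intro i
    exact ((measurable_rndF m hm).comp (hf i)) (measurableSet_singleton _)
  · intro b y
    unfold gPart
    by_cases hy : finFunctionFinEquiv.symm b = fun i => rndF m hm (f i y)
    · right; rw [if_pos hy]
    · left; rw [if_neg hy]
  · intro y
    unfold gPart
    rw [Fintype.sum_equiv finFunctionFinEquiv.symm _
      (fun a => if a = (fun i => rndF m hm (f i y)) then (1:ℝ) else 0) (fun b => rfl)]
    rw [Finset.sum_ite_eq' Finset.univ _ (fun _ => (1:ℝ))]
    rw [if_pos (Finset.mem_univ _)]

lemma gPart_value (k m : ℕ) (hm : 0 < m) (f : Fin k → Ω → ℝ) (j : Fin k) (y : Ω) :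
    ∑ b : Fin (m ^ k), cval m (finFunctionFinEquiv.symm b j) * gPart k m hm f b y =
      cval m (rndF m hm (f j y)) := by
  unfold gPart
  rw [Fintype.sum_equiv finFunctionFinEquiv.symm _
    (fun a => cval m (a j) * if a = (fun i => rndF m hm (f i y)) then (1:ℝ) else 0)
    (fun b => rfl)]
  have : ∀ a : Fin k → Fin m,
      cval m (a j) * (if a = (fun i => rndF m hm (f i y)) then (1:ℝ) else 0) =
      if a = (fun i => rndF m hm (f i y)) then cval m (a j) else 0 := by
    intro a
    rw [mul_ite, mul_one, mul_zero]
  rw [Finset.sum_congr rfl (fun a _ => this a)]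
  simp only [Finset.sum_ite_eq', Finset.mem_univ, if_true]

/-- Sums against a function partition stay in `[-1,1]`. -/
lemma part_sum_mem (k m : ℕ) (hm : 0 < m) (h : Fin (m ^ k) → Ω → ℝ)
    (hp : IsFunctionPartition h) (j : Fin k) (y : Ω) :
    ∑ b : Fin (m ^ k), cval m (finFunctionFinEquiv.symm b j) * h b y ∈ Icc (-1 : ℝ) 1 := by
  obtain ⟨-, h01, hsum⟩ := hp
  have habs : |∑ b : Fin (m ^ k), cval m (finFunctionFinEquiv.symm b j) * h b y| ≤ 1 := by
    calc |∑ b : Fin (m ^ k), cval m (finFunctionFinEquiv.symm b j) * h b y|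
        ≤ ∑ b : Fin (m ^ k), |cval m (finFunctionFinEquiv.symm b j) * h b y| :=
          Finset.abs_sum_le_sum_abs _ _
      _ ≤ ∑ b : Fin (m ^ k), h b y := by
          apply Finset.sum_le_sum
          intro b _
          rw [abs_mul]
          have hb0 : 0 ≤ h b y := by rcases h01 b y with h0 | h0 <;> simp [h0]
          rw [abs_of_nonneg hb0]
          calc |cval m (finFunctionFinEquiv.symm b j)| * h b y ≤ 1 * h b y :=
                mul_le_mul_of_nonneg_right (abs_cval_le hm _) hb0
            _ = h b y := one_mul _
      _ = 1 := hsum y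
  rw [abs_le] at habs
  exact ⟨habs.1, habs.2⟩

lemma part_sum_measurable (k m : ℕ) (h : Fin (m ^ k) → Ω → ℝ)
    (hmeas : ∀ b, Measurable (h b)) (j : Fin k) :
    Measurable (fun y => ∑ b : Fin (m ^ k), cval m (finFunctionFinEquiv.symm b j) * h b y) :=
  Finset.measurable_sum _ (fun b _ => (hmeas b).const_mul _)

end PartitionConstr
section Measures

variable {Ω₁ Ω₂ : Type*} [MeasurableSpace Ω₁] [MeasurableSpace Ω₂]

lemma Smeasure_prob (P₁ : Measure Ω₁) (P₂ : Measure Ω₂) [IsProbabilityMeasure P₁]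
    [IsProbabilityMeasure P₂] {k : ℕ} {f : Fin k → Ω₁ → ℝ} {W : Ω₁ × Ω₁ × Ω₂ → ℝ}
    (hf : ∀ i, Measurable (f i)) (hW : Measurable W) :
    IsProbabilityMeasure (Smeasure P₁ P₂ f W) := by
  unfold Smeasure
  exact Measure.isProbabilityMeasure_map (measurable_sVec hf hW).aemeasurable

lemma Smeasure_linT_map (P₁ : Measure Ω₁) (P₂ : Measure Ω₂) (k m : ℕ) (hm : 0 < m)
    {h : Fin (m ^ k) → Ω₁ → ℝ} {W : Ω₁ × Ω₁ × Ω₂ → ℝ}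
    (hh : ∀ b, Measurable (h b)) (hW : Measurable W) :
    Smeasure P₁ P₂
        (fun j y => ∑ b : Fin (m ^ k), cval m (finFunctionFinEquiv.symm b j) * h b y) W
      = (Smeasure P₁ P₂ h W).map (linT (Mmat k m)) := by
  unfold Smeasure
  rw [Measure.map_map (linT_lipschitz (abs_Mmat_le hm)).continuous.measurable
    (measurable_sVec hh hW)]
  congr 1
  funext x
  exact (linT_sVec k m h W x).symm

lemma sVec_dist_le (k : ℕ) (f f' : Fin k → Ω₁ → ℝ) (W : Ω₁ × Ω₁ × Ω₂ → ℝ)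
    (x : Ω₁ × Ω₁ × Ω₂) {c : ℝ} (hc : 0 ≤ c) (hff' : ∀ j y, |f j y - f' j y| ≤ c) :
    dist (sVec k f W x) (sVec k f' W x) ≤ (2 * k + 1 : ℕ) * c := by
  apply dist_le_of_coords _ _ hc
  intro i
  rw [sVec_apply, sVec_apply]
  by_cases hi : (i : ℕ) < 2 * k
  · rw [dif_pos hi, dif_pos hi]
    by_cases hp : (i : ℕ) % 2 = 0
    · rw [if_pos hp, if_pos hp]; exact hff' _ _
    · rw [if_neg hp, if_neg hp]; exact hff' _ _
  · rw [dif_neg hi, dif_neg hi]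
    simpa using hc

end Measures

section Haus

lemma eHausLP_le {X : Type*} [MeasurableSpace X] [PseudoEMetricSpace X]
    {A B : Set (Measure X)} {c : ℝ≥0∞}
    (h1 : ∀ μ ∈ A, ∃ ν ∈ B, levyProkhorovEDist μ ν ≤ c)
    (h2 : ∀ ν ∈ B, ∃ μ ∈ A, levyProkhorovEDist μ ν ≤ c) :
    eHausLP A B ≤ c := by
  apply max_le
  · apply iSup₂_le
    intro μ hμ
    obtain ⟨ν, hν, hd⟩ := h1 μ hμ
    exact le_trans (biInf_le _ hν) hd
  · apply iSup₂_le
    intro ν hν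
    obtain ⟨μ, hμ, hd⟩ := h2 ν hν
    exact le_trans (biInf_le _ hμ) hd

lemma eHausLP_ne_top_of_prob {X : Type*} [MeasurableSpace X] [PseudoEMetricSpace X]
    {A B : Set (Measure X)} (hA : A.Nonempty) (hB : B.Nonempty)
    (hPA : ∀ μ ∈ A, IsProbabilityMeasure μ) (hPB : ∀ ν ∈ B, IsProbabilityMeasure ν) :
    eHausLP A B ≤ 1 := by
  apply eHausLP_le
  · intro μ hμ
    obtain ⟨ν, hν⟩ := hB
    refine ⟨ν, hν, ?_⟩
    have h1 := (hPA μ hμ).measure_univ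
    have h2 := (hPB ν hν).measure_univ
    calc levyProkhorovEDist μ ν ≤ max (μ Set.univ) (ν Set.univ) :=
          levyProkhorovEDist_le_max_measure_univ μ ν
      _ ≤ 1 := by rw [h1, h2]; simp
  · intro ν hν
    obtain ⟨μ, hμ⟩ := hA
    refine ⟨μ, hμ, ?_⟩
    have h1 := (hPA μ hμ).measure_univ
    have h2 := (hPB ν hν).measure_univ
    calc levyProkhorovEDist μ ν ≤ max (μ Set.univ) (ν Set.univ) :=
          levyProkhorovEDist_le_max_measure_univ μ ν
      _ ≤ 1 := by rw [h1, h2]; simp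

lemma exists_of_eHausLP_le_left {X : Type*} [MeasurableSpace X] [PseudoEMetricSpace X]
    {A B : Set (Measure X)} {c c' : ℝ≥0∞} (h : eHausLP A B ≤ c) (hcc : c < c')
    {μ : Measure X} (hμ : μ ∈ A) : ∃ ν ∈ B, levyProkhorovEDist μ ν ≤ c' := by
  have h1 : (⨅ ν ∈ B, levyProkhorovEDist μ ν) < c' := by
    refine lt_of_le_of_lt ?_ hcc
    refine le_trans ?_ (le_trans (le_max_left _ _) h)
    exact le_iSup₂ (f := fun μ _ => ⨅ ν ∈ B, levyProkhorovEDist μ ν) μ hμ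
  rw [iInf_lt_iff] at h1
  obtain ⟨ν, hν⟩ := h1
  rw [iInf_lt_iff] at hν
  obtain ⟨hνB, hd⟩ := hν
  exact ⟨ν, hνB, hd.le⟩

lemma exists_of_eHausLP_le_right {X : Type*} [MeasurableSpace X] [PseudoEMetricSpace X]
    {A B : Set (Measure X)} {c c' : ℝ≥0∞} (h : eHausLP A B ≤ c) (hcc : c < c')
    {ν : Measure X} (hν : ν ∈ B) : ∃ μ ∈ A, levyProkhorovEDist ν μ ≤ c' := by
  have h1 : (⨅ μ ∈ A, levyProkhorovEDist μ ν) < c' := by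
    refine lt_of_le_of_lt ?_ hcc
    refine le_trans ?_ (le_trans (le_max_right _ _) h)
    exact le_iSup₂ (f := fun ν _ => ⨅ μ ∈ A, levyProkhorovEDist μ ν) ν hν
  rw [iInf_lt_iff] at h1
  obtain ⟨μ, hμ⟩ := h1
  rw [iInf_lt_iff] at hμ
  obtain ⟨hμA, hd⟩ := hμ
  exact ⟨μ, hμA, by rw [levyProkhorovEDist_comm]; exact hd.le⟩

end Haus
section Nonempty

lemma mem_Sk'_prob (V : PVar) (k' : ℕ) {μ : Measure (RE (2 * k' + 1))}
    (hμ : μ ∈ V.Sk' k') : IsProbabilityMeasure μ := by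
  haveI := V.prob₁; haveI := V.prob₂
  obtain ⟨f, ⟨hf, -, -⟩, rfl⟩ := hμ
  exact Smeasure_prob _ _ hf V.meas

lemma Sk'_nonempty (V : PVar) (k' : ℕ) (hk' : 0 < k') : (V.Sk' k').Nonempty := by
  classical
  refine ⟨Smeasure V.P₁ V.P₂ (fun i (_ : V.Ω₁) => if i = (⟨0, hk'⟩ : Fin k') then (1:ℝ) else 0)
    V.W, ⟨_, ⟨?_, ?_, ?_⟩, rfl⟩⟩
  · intro i; exact measurable_const
  · intro i x
    by_cases h : i = (⟨0, hk'⟩ : Fin k')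
    · right; rw [if_pos h]
    · left; rw [if_neg h]
  · intro x
    simp [Finset.sum_ite_eq', Finset.mem_univ]

end Nonempty

universe w₁ w₂ w₃ w₄

lemma oneSided (k m : ℕ) (hm : 0 < m) {δ2 : ℝ}
    (V : PVar.{w₁, w₂}) (U : PVar.{w₃, w₄})
    (H : ∀ μ' ∈ V.Sk' (m ^ k), ∃ ν' ∈ U.Sk' (m ^ k),
      levyProkhorovEDist μ' ν' ≤ ENNReal.ofReal δ2) :
    ∀ μ ∈ V.Sk k, ∃ ν ∈ U.Sk k, levyProkhorovEDist μ ν ≤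
      ENNReal.ofReal ((2 * k + 1 : ℕ) * (1 / m)) +
      ((((2 * k + 1) * (2 * m ^ k + 1) : ℕ) : ℝ≥0) : ℝ≥0∞) * ENNReal.ofReal δ2 := by
  haveI := V.prob₁; haveI := V.prob₂; haveI := U.prob₁; haveI := U.prob₂
  intro μ hμ
  obtain ⟨f, hfm, hfb, rfl⟩ := hμ
  set g := gPart k m hm f with hgdef
  have hgp := gPart_isPartition k m hm f hfm
  have hμg : Smeasure V.P₁ V.P₂ g V.W ∈ V.Sk' (m ^ k) := ⟨g, hgp, rfl⟩
  obtain ⟨ν', hν', hdist⟩ := H _ hμg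
  obtain ⟨h, hhp, rfl⟩ := hν'
  set F : Fin k → V.Ω₁ → ℝ :=
    fun j y => ∑ b : Fin (m ^ k), cval m (finFunctionFinEquiv.symm b j) * g b y with hF
  set G : Fin k → U.Ω₁ → ℝ :=
    fun j y => ∑ b : Fin (m ^ k), cval m (finFunctionFinEquiv.symm b j) * h b y with hG
  have hFm : ∀ j, Measurable (F j) := fun j => part_sum_measurable k m g hgp.1 j
  have hGm : ∀ j, Measurable (G j) := fun j => part_sum_measurable k m h hhp.1 j
  refine ⟨Smeasure U.P₁ U.P₂ G U.W,
    ⟨G, hGm, fun j y => part_sum_mem k m hm h hhp j y, rfl⟩, ?_⟩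
  haveI hP1 : IsProbabilityMeasure (Smeasure V.P₁ V.P₂ g V.W) :=
    Smeasure_prob _ _ hgp.1 V.meas
  haveI hP2 : IsProbabilityMeasure (Smeasure U.P₁ U.P₂ h U.W) :=
    Smeasure_prob _ _ hhp.1 U.meas
  have hm' : (0:ℝ) < m := by exact_mod_cast hm
  have step1 : levyProkhorovEDist (Smeasure V.P₁ V.P₂ f V.W) (Smeasure V.P₁ V.P₂ F V.W)
      ≤ ENNReal.ofReal ((2 * k + 1 : ℕ) * (1 / m)) := by
    unfold Smeasure
    apply lpEDist_map_le_of_dist_le _ (measurable_sVec hfm V.meas)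
      (measurable_sVec hFm V.meas) (by positivity)
    intro x
    apply sVec_dist_le _ _ _ _ _ (by positivity)
    intro j y
    have hFv : F j y = cval m (rndF m hm (f j y)) := gPart_value k m hm f j y
    rw [hFv]
    exact rnd_err hm (hfb j y)
  have step2 : Smeasure V.P₁ V.P₂ F V.W =
      (Smeasure V.P₁ V.P₂ g V.W).map (linT (Mmat k m)) :=
    Smeasure_linT_map _ _ k m hm hgp.1 V.meas
  have step2' : Smeasure U.P₁ U.P₂ G U.W =
      (Smeasure U.P₁ U.P₂ h U.W).map (linT (Mmat k m)) :=
    Smeasure_linT_map _ _ k m hm hhp.1 U.meas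
  have hL : 1 ≤ (((2 * k + 1) * (2 * m ^ k + 1) : ℕ) : ℝ≥0) := by
    have : 1 ≤ (2 * k + 1) * (2 * m ^ k + 1) := Nat.one_le_iff_ne_zero.mpr (by positivity)
    exact_mod_cast this
  have step3 : levyProkhorovEDist (Smeasure V.P₁ V.P₂ F V.W) (Smeasure U.P₁ U.P₂ G U.W)
      ≤ ((((2 * k + 1) * (2 * m ^ k + 1) : ℕ) : ℝ≥0) : ℝ≥0∞) * ENNReal.ofReal δ2 := by
    rw [step2, step2']
    refine le_trans (lpEDist_map_lipschitz hL (linT_lipschitz (abs_Mmat_le hm)) _ _) ?_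
    exact mul_le_mul_right hdist _
  calc levyProkhorovEDist (Smeasure V.P₁ V.P₂ f V.W) (Smeasure U.P₁ U.P₂ G U.W)
      ≤ levyProkhorovEDist (Smeasure V.P₁ V.P₂ f V.W) (Smeasure V.P₁ V.P₂ F V.W) +
        levyProkhorovEDist (Smeasure V.P₁ V.P₂ F V.W) (Smeasure U.P₁ U.P₂ G U.W) :=
        levyProkhorovEDist_triangle _ _ _
    _ ≤ ENNReal.ofReal ((2 * k + 1 : ℕ) * (1 / m)) +
        ((((2 * k + 1) * (2 * m ^ k + 1) : ℕ) : ℝ≥0) : ℝ≥0∞) * ENNReal.ofReal δ2 :=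
        add_le_add step1 step3
/-- For every `ε > 0` and integer `k ≥ 1` there exist `δ > 0` and an
integer `k' ≥ 1` such that any two P-variables `W, U` with
`d_H(S'_{k'}(W), S'_{k'}(U)) ≤ δ` satisfy `d_H(S_k(W), S_k(U)) ≤ ε`. -/
theorem exists_kprime_delta_profiles :
    ∀ ε > (0 : ℝ), ∀ k : ℕ, 1 ≤ k → ∃ δ > (0 : ℝ), ∃ k' : ℕ, 1 ≤ k' ∧
      ∀ (W : PVar.{u₁, u₂}) (U : PVar.{u₃, u₄}),
        dHLP (W.Sk' k') (U.Sk' k') ≤ δ → dHLP (W.Sk k) (U.Sk k) ≤ ε := by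
  intro ε hε k hk
  set m : ℕ := ⌈(4 * (2 * k + 1 : ℝ)) / ε⌉₊ + 1 with hmdef
  have hm : 0 < m := Nat.succ_pos _
  have hm' : (0:ℝ) < m := by exact_mod_cast hm
  have hk' : 1 ≤ m ^ k := Nat.one_le_pow _ _ hm
  set Creal : ℝ := (((2 * k + 1) * (2 * m ^ k + 1) : ℕ) : ℝ) with hCdef
  have hCpos : 0 < Creal := by
    rw [hCdef]
    have : 0 < (2 * k + 1) * (2 * m ^ k + 1) := by positivity
    exact_mod_cast this
  set δ : ℝ := ε / (8 * Creal) with hδdef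
  have hδ : 0 < δ := by rw [hδdef]; positivity
  refine ⟨δ, hδ, m ^ k, hk', ?_⟩
  intro W U hWU
  haveI := W.prob₁; haveI := W.prob₂; haveI := U.prob₁; haveI := U.prob₂
  -- upgrade the hypothesis to the extended Hausdorff distance
  have hprobW : ∀ μ ∈ W.Sk' (m ^ k), IsProbabilityMeasure μ :=
    fun μ hμ => mem_Sk'_prob W (m ^ k) hμ
  have hprobU : ∀ μ ∈ U.Sk' (m ^ k), IsProbabilityMeasure μ :=
    fun μ hμ => mem_Sk'_prob U (m ^ k) hμ
  have hfin : eHausLP (W.Sk' (m ^ k)) (U.Sk' (m ^ k)) ≤ 1 :=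
    eHausLP_ne_top_of_prob (Sk'_nonempty W (m ^ k) hk') (Sk'_nonempty U (m ^ k) hk')
      hprobW hprobU
  have hne : eHausLP (W.Sk' (m ^ k)) (U.Sk' (m ^ k)) ≠ ∞ :=
    (lt_of_le_of_lt hfin ENNReal.one_lt_top).ne
  have hWU' : (eHausLP (W.Sk' (m ^ k)) (U.Sk' (m ^ k))).toReal ≤ δ := hWU
  have hofr : eHausLP (W.Sk' (m ^ k)) (U.Sk' (m ^ k)) ≤ ENNReal.ofReal δ :=
    (ENNReal.le_ofReal_iff_toReal_le hne hδ.le).mpr hWU'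
  have hlt : ENNReal.ofReal δ < ENNReal.ofReal (2 * δ) := by
    rw [ENNReal.ofReal_lt_ofReal_iff (by linarith)]
    linarith
  have H1 : ∀ μ' ∈ W.Sk' (m ^ k), ∃ ν' ∈ U.Sk' (m ^ k),
      levyProkhorovEDist μ' ν' ≤ ENNReal.ofReal (2 * δ) :=
    fun μ' hμ' => exists_of_eHausLP_le_left hofr hlt hμ'
  have H2 : ∀ μ' ∈ U.Sk' (m ^ k), ∃ ν' ∈ W.Sk' (m ^ k),
      levyProkhorovEDist μ' ν' ≤ ENNReal.ofReal (2 * δ) :=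
    fun μ' hμ' => exists_of_eHausLP_le_right hofr hlt hμ'
  have B1 := oneSided k m hm W U H1
  have B2 := oneSided k m hm U W H2
  -- the quantitative bound is at most `ofReal ε`
  have hbound : ENNReal.ofReal ((2 * k + 1 : ℕ) * (1 / m)) +
      ((((2 * k + 1) * (2 * m ^ k + 1) : ℕ) : ℝ≥0) : ℝ≥0∞) * ENNReal.ofReal (2 * δ)
        ≤ ENNReal.ofReal ε := by
    have hceil : (4 * (2 * k + 1 : ℝ)) / ε ≤ (m : ℝ) := by
      rw [hmdef]
      push_cast
      have := Nat.le_ceil ((4 * (2 * k + 1 : ℝ)) / ε)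
      linarith
    have h1 : ((2 * k + 1 : ℕ) : ℝ) * (1 / m) ≤ ε / 4 := by
      rw [mul_one_div, div_le_div_iff₀ hm' (by norm_num : (0:ℝ) < 4)]
      rw [div_le_iff₀ hε] at hceil
      push_cast at hceil ⊢
      nlinarith
    have h2 : Creal * (2 * δ) = ε / 4 := by
      rw [hδdef]
      field_simp
      ring
    have hcast : ((((2 * k + 1) * (2 * m ^ k + 1) : ℕ) : ℝ≥0) : ℝ≥0∞) =
        ENNReal.ofReal Creal := by
      rw [hCdef, ENNReal.ofReal_natCast]
      norm_cast
    rw [hcast, ← ENNReal.ofReal_mul hCpos.le, h2]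
    calc ENNReal.ofReal ((2 * k + 1 : ℕ) * (1 / m)) + ENNReal.ofReal (ε / 4)
        ≤ ENNReal.ofReal (ε / 4) + ENNReal.ofReal (ε / 4) :=
          add_le_add (ENNReal.ofReal_le_ofReal h1) le_rfl
      _ = ENNReal.ofReal (ε / 4 + ε / 4) := (ENNReal.ofReal_add (by positivity) (by positivity)).symm
      _ ≤ ENNReal.ofReal ε := ENNReal.ofReal_le_ofReal (by linarith)
  have hmain : eHausLP (W.Sk k) (U.Sk k) ≤ ENNReal.ofReal ε := by
    apply eHausLP_le
    · intro μ hμ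
      obtain ⟨ν, hν, hd⟩ := B1 μ hμ
      exact ⟨ν, hν, hd.trans hbound⟩
    · intro ν hν
      obtain ⟨μ, hμ, hd⟩ := B2 ν hν
      exact ⟨μ, hμ, by rw [levyProkhorovEDist_comm]; exact hd.trans hbound⟩
  exact ENNReal.toReal_le_of_le_ofReal hε.le hmain

end
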